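/- Let M and M' be two MDPs with the same finite state space S, action space A, reward function r, and discount factor γ < 1, differing only in their transition kernels T and T'. Suppose |r(s,a)| ≤ R for all s,a, and for all s,a: Σ_{s'} |T'(s,a,s') - T(s,a,s')| ≤ η. Then the optimal action-value functions satisfy |Q'(s,a) - Q(s,a)| ≤ γ·η·R/(1-γ)² for all states s and actions a. -/

import Mathlib

/-- Perturbation bound for optimal action-value functions of two MDPs that
differ only in their transition kernels. -/
theorem q_perturbation_bound
    {S A : Type*} [Fintype S] [Fintype A] [Nonempty A]
    (T T' : S → A → S → ℝ) (r : S → A → ℝ) (γ R η : ℝ)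
    (hγ0 : 0 ≤ γ) (hγ1 : γ < 1)
    (hT0 : ∀ s a s', 0 ≤ T s a s') (hT1 : ∀ s a, ∑ s', T s a s' = 1)
    (hT'0 : ∀ s a s', 0 ≤ T' s a s') (hT'1 : ∀ s a, ∑ s', T' s a s' = 1)
    (hR : ∀ s a, |r s a| ≤ R)
    (hη : ∀ s a, ∑ s', |T' s a s' - T s a s'| ≤ η)
    (Q Q' : S → A → ℝ)
    (hQ : ∀ s a, Q s a =
      r s a + γ * ∑ s', T s a s' *
        (Finset.univ.sup' Finset.univ_nonempty (fun a' => Q s' a')))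
    (hQ' : ∀ s a, Q' s a =
      r s a + γ * ∑ s', T' s a s' *
        (Finset.univ.sup' Finset.univ_nonempty (fun a' => Q' s' a'))) :
    ∀ s a, |Q' s a - Q s a| ≤ γ * η * R / (1 - γ) ^ 2 := by
  intro s₀ a₀
  have hS : Nonempty S := ⟨s₀⟩
  have hne : (Finset.univ : Finset (S × A)).Nonempty := Finset.univ_nonempty
  have hγ' : 0 < 1 - γ := by linarith
  have hR0 : 0 ≤ R := le_trans (abs_nonneg _) (hR s₀ a₀)
  have hη0 : 0 ≤ η := le_trans (Finset.sum_nonneg fun _ _ => abs_nonneg _) (hη s₀ a₀)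
  set V : S → ℝ := fun s => Finset.univ.sup' Finset.univ_nonempty (fun a' => Q s a') with hVdef
  set V' : S → ℝ := fun s => Finset.univ.sup' Finset.univ_nonempty (fun a' => Q' s a') with hV'def
  have hQV : ∀ s a, Q s a = r s a + γ * ∑ s', T s a s' * V s' := hQ
  have hQ'V : ∀ s a, Q' s a = r s a + γ * ∑ s', T' s a s' * V' s' := hQ'
  have hQleV : ∀ s a, Q s a ≤ V s := fun s a =>
    Finset.le_sup' (f := fun a' => Q s a') (Finset.mem_univ a)
  have hQ'leV' : ∀ s a, Q' s a ≤ V' s := fun s a =>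
    Finset.le_sup' (f := fun a' => Q' s a') (Finset.mem_univ a)
  have hVle : ∀ s (C : ℝ), (∀ a, Q s a ≤ C) → V s ≤ C := fun s C h =>
    Finset.sup'_le _ _ fun a _ => h a
  have hV'le' : ∀ s (C : ℝ), (∀ a, Q' s a ≤ C) → V' s ≤ C := fun s C h =>
    Finset.sup'_le _ _ fun a _ => h a
  -- averaging lemma for a stochastic kernel
  have key : ∀ (K : S → ℝ), (∀ s', 0 ≤ K s') → (∑ s', K s' = 1) →
      ∀ (f : S → ℝ) (C : ℝ), (∀ s', |f s'| ≤ C) → |∑ s', K s' * f s'| ≤ C := by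
    intro K hK0 hK1 f C hf
    calc |∑ s', K s' * f s'| ≤ ∑ s', |K s' * f s'| := Finset.abs_sum_le_sum_abs _ _
      _ = ∑ s', K s' * |f s'| := by
          refine Finset.sum_congr rfl fun s' _ => ?_
          rw [abs_mul, abs_of_nonneg (hK0 s')]
      _ ≤ ∑ s', K s' * C := Finset.sum_le_sum fun s' _ =>
          mul_le_mul_of_nonneg_left (hf s') (hK0 s')
      _ = C := by rw [← Finset.sum_mul, hK1, one_mul]
  -- bound on Q'
  set M : ℝ := Finset.univ.sup' hne (fun p : S × A => |Q' p.1 p.2|) with hMdef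
  have hMle : ∀ s a, |Q' s a| ≤ M := fun s a =>
    Finset.le_sup' (f := fun p : S × A => |Q' p.1 p.2|) (Finset.mem_univ (s, a))
  have hV'le : ∀ s, |V' s| ≤ M := by
    intro s
    rw [abs_le]
    refine ⟨?_, hV'le' s M fun a => (abs_le.mp (hMle s a)).2⟩
    obtain ⟨a⟩ := ‹Nonempty A›
    exact le_trans (abs_le.mp (hMle s a)).1 (hQ'leV' s a)
  have hMbound : M ≤ R / (1 - γ) := by
    obtain ⟨p, _, hp⟩ := Finset.exists_mem_eq_sup' hne (fun p : S × A => |Q' p.1 p.2|)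
    have h1 : |Q' p.1 p.2| ≤ R + γ * M := by
      rw [hQ'V p.1 p.2]
      calc |r p.1 p.2 + γ * ∑ s', T' p.1 p.2 s' * V' s'|
          ≤ |r p.1 p.2| + |γ * ∑ s', T' p.1 p.2 s' * V' s'| := abs_add_le _ _
        _ ≤ R + γ * M := by
            have h := key (T' p.1 p.2) (hT'0 p.1 p.2) (hT'1 p.1 p.2) V' M hV'le
            have h' := mul_le_mul_of_nonneg_left h hγ0
            rw [abs_mul, abs_of_nonneg hγ0]
            linarith [hR p.1 p.2]
    have hMeq : M = |Q' p.1 p.2| := hMdef.trans hp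
    rw [le_div_iff₀ hγ']
    nlinarith [hMeq ▸ h1]
  -- gap bound
  set D : ℝ := Finset.univ.sup' hne (fun p : S × A => |Q' p.1 p.2 - Q p.1 p.2|) with hDdef
  have hDle : ∀ s a, |Q' s a - Q s a| ≤ D := fun s a =>
    Finset.le_sup' (f := fun p : S × A => |Q' p.1 p.2 - Q p.1 p.2|) (Finset.mem_univ (s, a))
  have hVV' : ∀ s, |V' s - V s| ≤ D := by
    intro s
    have h1 : V s ≤ V' s + D := hVle s _ fun a =>
      le_trans (by linarith [(abs_le.mp (hDle s a)).1]) (add_le_add_left (hQ'leV' s a) D)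
    have h2 : V' s ≤ V s + D := hV'le' s _ fun a =>
      le_trans (by linarith [(abs_le.mp (hDle s a)).2]) (add_le_add_left (hQleV s a) D)
    rw [abs_le]
    constructor <;> linarith
  have hDbound : D ≤ γ * η * R / (1 - γ) ^ 2 := by
    obtain ⟨p, _, hp⟩ := Finset.exists_mem_eq_sup' hne
      (fun p : S × A => |Q' p.1 p.2 - Q p.1 p.2|)
    have hsum : (∑ s', (T' p.1 p.2 s' - T p.1 p.2 s') * V' s')
        + ∑ s', T p.1 p.2 s' * (V' s' - V s')
        = (∑ s', T' p.1 p.2 s' * V' s') - ∑ s', T p.1 p.2 s' * V s' := by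
      rw [← Finset.sum_add_distrib, ← Finset.sum_sub_distrib]
      exact Finset.sum_congr rfl fun s' _ => by ring
    have hdiff : Q' p.1 p.2 - Q p.1 p.2 =
        γ * (∑ s', (T' p.1 p.2 s' - T p.1 p.2 s') * V' s'
          + ∑ s', T p.1 p.2 s' * (V' s' - V s')) := by
      rw [hQ'V p.1 p.2, hQV p.1 p.2, hsum]
      ring
    have h1 : |∑ s', (T' p.1 p.2 s' - T p.1 p.2 s') * V' s'| ≤ η * (R / (1 - γ)) := by
      calc |∑ s', (T' p.1 p.2 s' - T p.1 p.2 s') * V' s'|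
          ≤ ∑ s', |(T' p.1 p.2 s' - T p.1 p.2 s') * V' s'| := Finset.abs_sum_le_sum_abs _ _
        _ ≤ ∑ s', |T' p.1 p.2 s' - T p.1 p.2 s'| * (R / (1 - γ)) := by
            refine Finset.sum_le_sum fun s' _ => ?_
            rw [abs_mul]
            exact mul_le_mul_of_nonneg_left ((hV'le s').trans hMbound) (abs_nonneg _)
        _ ≤ η * (R / (1 - γ)) := by
            rw [← Finset.sum_mul]
            exact mul_le_mul_of_nonneg_right (hη p.1 p.2) (by positivity)
    have h2 : |∑ s', T p.1 p.2 s' * (V' s' - V s')| ≤ D :=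
      key (T p.1 p.2) (hT0 p.1 p.2) (hT1 p.1 p.2) _ D hVV'
    have hDeq : D = |Q' p.1 p.2 - Q p.1 p.2| := hDdef.trans hp
    have h3 : D ≤ γ * (η * (R / (1 - γ)) + D) := by
      nth_rewrite 1 [hDeq]
      rw [hdiff, abs_mul, abs_of_nonneg hγ0]
      exact mul_le_mul_of_nonneg_left (le_trans (abs_add_le _ _) (add_le_add h1 h2)) hγ0
    rw [le_div_iff₀ (by positivity : (0:ℝ) < (1 - γ) ^ 2)]
    have h4 : η * (R / (1 - γ)) * (1 - γ) = η * R := by field_simp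
    nlinarith [mul_le_mul_of_nonneg_right h3 hγ'.le, sq_nonneg (1 - γ)]
  exact le_trans (hDle s₀ a₀) hDbound
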